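/- If λ and μ are partitions contained in the ℓ×k rectangle and the Young diagram of λ (placed at the top-left of the rectangle) intersects the 180-degree rotation of μ (placed at the bottom-right of the rectangle), then for every partition ν contained in the ℓ×k rectangle the Littlewood-Richardson coefficient c^ν_{λ,μ} is zero. -/

import Mathlib

/-- `f` is a partition: weakly decreasing and eventually zero (0-indexed parts). -/
def IsPartition (f : ℕ → ℕ) : Prop :=
  (∀ i j, i ≤ j → f j ≤ f i) ∧ ∃ N, ∀ i, N ≤ i → f i = 0

/-- The partition `f` is contained in the `l × k` rectangle. -/
def InRect (f : ℕ → ℕ) (l k : ℕ) : Prop :=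
  IsPartition f ∧ f 0 ≤ k ∧ ∀ i, l ≤ i → f i = 0

/-- Number of nonzero parts of `f`. -/
noncomputable def numParts (f : ℕ → ℕ) : ℕ := {i | f i ≠ 0}.ncard

/-- Number of distinct nonzero part sizes of `f`. -/
noncomputable def numPartSizes (f : ℕ → ℕ) : ℕ := {n | n ≠ 0 ∧ ∃ i, f i = n}.ncard

/-- The cell `c = (i,j)` (0-indexed) lies in the skew shape `ν/λ`. -/
def InSkew (ν lam : ℕ → ℕ) (c : ℕ × ℕ) : Prop := lam c.1 ≤ c.2 ∧ c.2 < ν c.1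

/-- `c'` strictly precedes `c` in the right-to-left, top-to-bottom reading order. -/
def ReadBefore (c' c : ℕ × ℕ) : Prop := c'.1 < c.1 ∨ (c'.1 = c.1 ∧ c.2 < c'.2)

/-- `T` is a Littlewood–Richardson filling of the skew shape `ν/λ` with content `μ`:
a semistandard filling (positive entries, rows weakly increasing, columns strictly
increasing) whose entry `m+1` occurs `μ m` times, and whose right-to-left,
top-to-bottom reading word is a ballot sequence. -/
def IsLRFilling (lam mu ν : ℕ → ℕ) (T : ℕ × ℕ → ℕ) : Prop :=
  (∀ c, ¬ InSkew ν lam c → T c = 0) ∧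
  (∀ c, InSkew ν lam c → 1 ≤ T c) ∧
  (∀ i j j', InSkew ν lam (i, j) → InSkew ν lam (i, j') → j ≤ j' →
      T (i, j) ≤ T (i, j')) ∧
  (∀ i j, InSkew ν lam (i, j) → InSkew ν lam (i + 1, j) → T (i, j) < T (i + 1, j)) ∧
  (∀ m, {c | InSkew ν lam c ∧ T c = m + 1}.Finite ∧
      {c | InSkew ν lam c ∧ T c = m + 1}.ncard = mu m) ∧
  (∀ c, InSkew ν lam c → ∀ m, 1 ≤ m →
      {c' | InSkew ν lam c' ∧ (ReadBefore c' c ∨ c' = c) ∧ T c' = m + 1}.ncard ≤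
      {c' | InSkew ν lam c' ∧ (ReadBefore c' c ∨ c' = c) ∧ T c' = m}.ncard)

/-- The Littlewood–Richardson coefficient `c^ν_{λ,μ}`. -/
noncomputable def lrCoeff (lam mu ν : ℕ → ℕ) : ℕ :=
  Nat.card {T : ℕ × ℕ → ℕ // IsLRFilling lam mu ν T}

/-- Box `c = (i,j)` of the rectangle lies in `λ` placed at the top-left. -/
def InLam (lam : ℕ → ℕ) (c : ℕ × ℕ) : Prop := c.2 < lam c.1

/-- Box `c = (i,j)` of `l × k` lies in `rotate(μ)`, i.e. `μ` rotated 180° and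
placed at the bottom-right. -/
def InRot (mu : ℕ → ℕ) (l k : ℕ) (c : ℕ × ℕ) : Prop := k - mu (l - 1 - c.1) ≤ c.2

/-- The placements of `λ` (top-left) and `rotate(μ)` (bottom-right) in `l × k`
are disjoint. -/
def DisjointPlace (lam mu : ℕ → ℕ) (l k : ℕ) : Prop :=
  ∀ c : ℕ × ℕ, c.1 < l → c.2 < k → ¬ (InLam lam c ∧ InRot mu l k c)

/-- Column `j` of `l × k` is full for `λ ∪ rotate(μ)`. -/
def FullCol (lam mu : ℕ → ℕ) (l k j : ℕ) : Prop :=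
  ∀ i, i < l → (InLam lam (i, j) ∨ InRot mu l k (i, j))

/-- Row `i` of `l × k` is full for `λ ∪ rotate(μ)`. -/
def FullRow (lam mu : ℕ → ℕ) (l k i : ℕ) : Prop :=
  ∀ j, j < k → (InLam lam (i, j) ∨ InRot mu l k (i, j))

/-- `(λ, μ, l × k)` is a basic Richardson quadruple. -/
def BasicRQ (lam mu : ℕ → ℕ) (l k : ℕ) : Prop :=
  InRect lam l k ∧ InRect mu l k ∧ DisjointPlace lam mu l k ∧
  (∀ j, j < k → ¬ FullCol lam mu l k j) ∧ (∀ i, i < l → ¬ FullRow lam mu l k i)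

/-- The rectangle partition `(g^h)`. -/
def rectP (g h : ℕ) : ℕ → ℕ := fun i => if i < h then g else 0

/-- The hook partition `(b, 1^a)`. -/
def hookP (b a : ℕ) : ℕ → ℕ := fun i => if i = 0 then b else if i ≤ a then 1 else 0


/-- Cells of the skew shape with entry `m+1` in rows `0..i`. -/
def Qset (ν lam : ℕ → ℕ) (T : ℕ × ℕ → ℕ) (m i : ℕ) : Set (ℕ × ℕ) :=
  {c | InSkew ν lam c ∧ T c = m + 1 ∧ c.1 ≤ i}

lemma colStrict (lam ν : ℕ → ℕ) (T : ℕ × ℕ → ℕ)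
    (hlam : ∀ i j, i ≤ j → lam j ≤ lam i) (hν : ∀ i j, i ≤ j → ν j ≤ ν i)
    (hcol : ∀ i j, InSkew ν lam (i, j) → InSkew ν lam (i + 1, j) → T (i, j) < T (i + 1, j)) :
    ∀ d i j, InSkew ν lam (i, j) → InSkew ν lam (i + d + 1, j) → T (i, j) < T (i + d + 1, j) := by
  intro d
  induction d with
  | zero => exact fun i j h1 h2 => hcol i j h1 h2
  | succ d ih =>
    intro i j h1 h2
    have hmid : InSkew ν lam (i + d + 1, j) :=
      ⟨le_trans (hlam i (i + d + 1) (by omega)) h1.1,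
       lt_of_lt_of_le h2.2 (hν (i + d + 1) (i + d + 1 + 1) (by omega))⟩
    exact lt_trans (ih i j h1 hmid) (hcol (i + d + 1) j hmid h2)

lemma noFilling (lam mu ν : ℕ → ℕ) (l k : ℕ)
    (hlam : InRect lam l k) (hmu : InRect mu l k) (hν : InRect ν l k)
    (a : ℕ) (ha : a < l) (hsum : k + 1 ≤ lam a + mu (l - 1 - a))
    (T : ℕ × ℕ → ℕ) (hT : IsLRFilling lam mu ν T) : False := by
  obtain ⟨h0, hpos, hrow, hcol, hcont, hballot⟩ := hT
  set b := l - 1 - a with hbdef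
  have hQfin : ∀ m i, (Qset ν lam T m i).Finite := fun m i =>
    ((hcont m).1).subset (fun c hc => ⟨hc.1, hc.2.1⟩)
  have B : ∀ m i, (Qset ν lam T (m + 1) (i + 1)).ncard ≤ (Qset ν lam T m i).ncard := by
    intro m i
    rcases Set.eq_empty_or_nonempty (Qset ν lam T (m + 1) (i + 1)) with he | hne
    · rw [he, Set.ncard_empty]; exact Nat.zero_le _
    · obtain ⟨c, hcS, hmax⟩ := Set.Finite.exists_maximalFor
        (fun c : ℕ × ℕ => toLex (c.1, OrderDual.toDual c.2)) _ (hQfin (m + 1) (i + 1)) hne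
      have hle : ∀ c' ∈ Qset ν lam T (m + 1) (i + 1), ReadBefore c' c ∨ c' = c := by
        intro c' hc'
        have hfc : (toLex (c'.1, OrderDual.toDual c'.2) : Lex (ℕ × ℕᵒᵈ)) ≤
            toLex (c.1, OrderDual.toDual c.2) := by
          by_contra h
          have hlt := lt_of_not_ge h
          exact absurd (hmax hc' (le_of_lt hlt)) (not_le.mpr hlt)
        rw [Prod.Lex.le_iff] at hfc
        rcases hfc with h | ⟨h1, h2⟩
        · exact Or.inl (Or.inl h)
        · have h2' : c.2 ≤ c'.2 := h2
          rcases lt_or_eq_of_le h2' with h | h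
          · exact Or.inl (Or.inr ⟨h1, h⟩)
          · exact Or.inr (Prod.ext h1 h.symm)
      calc (Qset ν lam T (m + 1) (i + 1)).ncard
          ≤ {c' | InSkew ν lam c' ∧ (ReadBefore c' c ∨ c' = c) ∧ T c' = (m + 1) + 1}.ncard := by
            apply Set.ncard_le_ncard
            · exact fun c' hc' => ⟨hc'.1, hle c' hc', hc'.2.1⟩
            · exact ((hcont (m + 1)).1).subset (fun x hx => ⟨hx.1, hx.2.2⟩)
        _ ≤ {c' | InSkew ν lam c' ∧ (ReadBefore c' c ∨ c' = c) ∧ T c' = m + 1}.ncard :=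
            hballot c hcS.1 (m + 1) (by omega)
        _ ≤ (Qset ν lam T m i).ncard := by
            apply Set.ncard_le_ncard _ (hQfin m i)
            intro c' hc'
            refine ⟨hc'.1, hc'.2.2, ?_⟩
            rcases hc'.2.1 with (h | ⟨h1, h2⟩) | rfl
            · have := hcS.2.2; omega
            · exfalso
              have e1 : T (c.1, c.2) = m + 1 + 1 := hcS.2.1
              have e2 : T (c.1, c'.2) = m + 1 := by rw [← h1] at *; exact hc'.2.2
              have hsk : InSkew ν lam (c.1, c'.2) := by rw [← h1] at *; exact hc'.1
              have hle2 := hrow c.1 c.2 c'.2 hcS.1 hsk (le_of_lt h2)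
              omega
            · have e1 : T c' = m + 1 + 1 := hcS.2.1
              have e2 : T c' = m + 1 := hc'.2.2
              omega
  have C : ∀ t i, t ≤ i → (Qset ν lam T t i).ncard ≤ (Qset ν lam T 0 (i - t)).ncard := by
    intro t
    induction t with
    | zero => intro i _; simp
    | succ t ih =>
      intro i hti
      have h1 : i - 1 + 1 = i := by omega
      have h2 : i - 1 - t = i - (t + 1) := by omega
      calc (Qset ν lam T (t + 1) i).ncard
          = (Qset ν lam T (t + 1) ((i - 1) + 1)).ncard := by rw [h1]
        _ ≤ (Qset ν lam T t (i - 1)).ncard := B t (i - 1)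
        _ ≤ (Qset ν lam T 0 (i - 1 - t)).ncard := ih (i - 1) (by omega)
        _ = (Qset ν lam T 0 (i - (t + 1))).ncard := by rw [h2]
  have hQb : {c | InSkew ν lam c ∧ T c = b + 1} = Qset ν lam T b (l - 1) := by
    ext c
    simp only [Qset, Set.mem_setOf_eq]
    constructor
    · rintro ⟨h1, h2⟩
      refine ⟨h1, h2, ?_⟩
      by_contra hcon
      have hz : ν c.1 = 0 := hν.2.2 c.1 (by omega)
      have := h1.2
      omega
    · rintro ⟨h1, h2, _⟩; exact ⟨h1, h2⟩
  have hmub : mu b = (Qset ν lam T b (l - 1)).ncard := by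
    rw [← hQb]; exact ((hcont b).2).symm
  have hba : l - 1 - b = a := by omega
  have h1 : mu b ≤ (Qset ν lam T 0 a).ncard := by
    rw [hmub, ← hba]
    exact C b (l - 1) (by omega)
  have hinj : Set.InjOn Prod.snd (Qset ν lam T 0 a) := by
    have key : ∀ x y : ℕ × ℕ, x ∈ Qset ν lam T 0 a → y ∈ Qset ν lam T 0 a →
        x.2 = y.2 → x.1 < y.1 → False := by
      intro x y hx hy hxy hlt
      have h2 : InSkew ν lam (x.1 + (y.1 - x.1 - 1) + 1, x.2) := by
        have heq : x.1 + (y.1 - x.1 - 1) + 1 = y.1 := by omega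
        rw [heq, hxy]
        exact hy.1
      have hc := colStrict lam ν T hlam.1.1 hν.1.1 hcol (y.1 - x.1 - 1) x.1 x.2 hx.1 h2
      have ex : T (x.1, x.2) = 1 := hx.2.1
      have ey : T (x.1 + (y.1 - x.1 - 1) + 1, x.2) = 1 := by
        have heq : (x.1 + (y.1 - x.1 - 1) + 1, x.2) = (y.1, y.2) := by
          rw [hxy]
          have : x.1 + (y.1 - x.1 - 1) + 1 = y.1 := by omega
          rw [this]
        rw [heq]
        exact hy.2.1
      omega
    intro c hc c' hc' hsnd
    rcases lt_trichotomy c.1 c'.1 with h | h | h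
    · exact absurd (key c c' hc hc' hsnd h) (fun x => x)
    · exact Prod.ext h hsnd
    · exact absurd (key c' c hc' hc hsnd.symm h) (fun x => x)
  have himg : Prod.snd '' (Qset ν lam T 0 a) ⊆ ↑(Finset.Ico (lam a) k) := by
    rintro j ⟨c, hc, rfl⟩
    simp only [Finset.coe_Ico, Set.mem_Ico]
    constructor
    · exact le_trans (hlam.1.1 c.1 a hc.2.2) hc.1.1
    · exact lt_of_lt_of_le hc.1.2 (le_trans (hν.1.1 0 c.1 (Nat.zero_le _)) hν.2.1)
  have h2 : (Qset ν lam T 0 a).ncard ≤ k - lam a := by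
    rw [← Set.ncard_image_of_injOn hinj]
    calc (Prod.snd '' Qset ν lam T 0 a).ncard
        ≤ (↑(Finset.Ico (lam a) k) : Set ℕ).ncard :=
          Set.ncard_le_ncard himg (Finset.finite_toSet _)
      _ = k - lam a := by rw [Set.ncard_coe_finset, Nat.card_Ico]
  have hlak : lam a ≤ k := le_trans (hlam.1.1 0 a (Nat.zero_le _)) hlam.2.1
  omega

/-- If the placements of `λ` (top-left) and `rotate(μ)` (bottom-right) in `l × k`
intersect, then all LR coefficients `c^ν_{λ,μ}` with `ν ⊆ l × k` vanish. -/
theorem stmt0 (lam mu : ℕ → ℕ) (l k : ℕ)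
    (hlam : InRect lam l k) (hmu : InRect mu l k)
    (hint : ∃ c : ℕ × ℕ, c.1 < l ∧ c.2 < k ∧ InLam lam c ∧ InRot mu l k c) :
    ∀ ν : ℕ → ℕ, InRect ν l k → lrCoeff lam mu ν = 0 := by
  intro ν hν
  obtain ⟨⟨a, j0⟩, ha, hj, hL, hR⟩ := hint
  have hL' : j0 < lam a := hL
  have hR' : k - mu (l - 1 - a) ≤ j0 := hR
  have hmuk : mu (l - 1 - a) ≤ k := le_trans (hmu.1.1 0 _ (Nat.zero_le _)) hmu.2.1
  have hsum : k + 1 ≤ lam a + mu (l - 1 - a) := by omega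
  rw [lrCoeff, Nat.card_eq_zero]
  left
  refine ⟨fun x => ?_⟩
  obtain ⟨T, hT⟩ := x
  exact noFilling lam mu ν l k hlam hmu hν a ha hsum T hT
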